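/- Consider the filter ω'(t) = −C_d·C_f·ω(t) + C_f·K(ω(t))·v(t), where C_d, C_f > 0, v : [t₀,∞) → ℝ is continuous and bounded, K : ℝ → ℝ is continuous with K(x) → 0 as |x| → B_ω, K(0) = 1, and K(x)·v(t) bounded. If ω(t₀) = 0, then |ω(t)| < B_ω for all t ≥ t₀. -/

import Mathlib

open Set Filter

private lemma aux_onesided (Cd Cf Bω t₀ : ℝ) (hCd : 0 < Cd) (hCf : 0 < Cf) (hB : 0 < Bω)
    (ω v K : ℝ → ℝ)
    (hv_bdd : ∃ Mv, ∀ t, t₀ ≤ t → |v t| ≤ Mv)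
    (hK_lim_pos : Filter.Tendsto K (nhdsWithin Bω (Set.Iio Bω)) (nhds 0))
    (hode : ∀ t, t₀ ≤ t →
      HasDerivAt ω (-Cd * Cf * ω t + Cf * K (ω t) * v t) t)
    (h0 : ω t₀ = 0) :
    ∀ t, t₀ ≤ t → ω t < Bω := by
  by_contra hcon
  push_neg at hcon
  obtain ⟨t₁, ht₁, hωt₁⟩ := hcon
  -- continuity of ω on [t₀, ∞)
  have hωcont : ∀ a b : ℝ, t₀ ≤ a → ContinuousOn ω (Icc a b) := by
    intro a b ha
    intro x hx
    exact ((hode x (ha.trans hx.1)).continuousAt).continuousWithinAt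
  -- first hitting time s
  set S : Set ℝ := Icc t₀ t₁ ∩ ω ⁻¹' (Ici Bω) with hS
  have hSclosed : IsClosed S :=
    (hωcont t₀ t₁ le_rfl).preimage_isClosed_of_isClosed isClosed_Icc isClosed_Ici
  have hSne : S.Nonempty := ⟨t₁, ⟨ht₁, le_rfl⟩, hωt₁⟩
  have hSbdd : BddBelow S := ⟨t₀, fun x hx => hx.1.1⟩
  set s := sInf S with hs
  have hsS : s ∈ S := hSclosed.csInf_mem hSne hSbdd
  have hst₀ : t₀ ≤ s := hsS.1.1
  have hst₁ : s ≤ t₁ := hsS.1.2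
  have hωs : Bω ≤ ω s := hsS.2
  have ht₀S : t₀ ∉ S := fun h => absurd h.2 (by simp [h0]; linarith)
  have hslt : t₀ < s := lt_of_le_of_ne hst₀ (fun h => ht₀S (h ▸ hsS))
  have hbefore : ∀ t, t₀ ≤ t → t < s → ω t < Bω := by
    intro t ht hts
    by_contra h
    push_neg at h
    exact absurd (csInf_le hSbdd ⟨⟨ht, hts.le.trans hst₁⟩, h⟩) (not_le.mpr hts)
  -- bound on v
  obtain ⟨Mv₀, hMv₀⟩ := hv_bdd
  set Mv := max Mv₀ 0 with hMv
  have hMvnn : 0 ≤ Mv := le_max_right _ _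
  have hMvb : ∀ t, t₀ ≤ t → |v t| ≤ Mv := fun t ht => (hMv₀ t ht).trans (le_max_left _ _)
  -- small ε, δ
  set ε := Cd * Bω / (2 * (Mv + 1)) with hε
  have hεpos : 0 < ε := by
    apply div_pos (by positivity) (by positivity)
  have hKsmall : ∃ δ > 0, ∀ x, Bω - δ < x → x < Bω → |K x| < ε := by
    have := hK_lim_pos (Metric.ball_mem_nhds 0 hεpos)
    rw [Filter.mem_map, Metric.mem_nhdsWithin_iff] at this
    obtain ⟨δ, hδ, hδsub⟩ := this
    refine ⟨δ, hδ, fun x hx1 hx2 => ?_⟩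
    have : x ∈ Metric.ball Bω δ ∩ Iio Bω := by
      constructor
      · rw [Metric.mem_ball, Real.dist_eq, abs_lt]; constructor <;> linarith
      · exact hx2
    have := hδsub this
    simpa [Real.dist_eq] using this
  obtain ⟨δ₀, hδ₀, hKs⟩ := hKsmall
  set δ := min δ₀ (Bω / 2) with hδdef
  have hδpos : 0 < δ := lt_min hδ₀ (by linarith)
  have hδle : δ ≤ Bω / 2 := min_le_right _ _
  -- derivative is negative in the band
  have hderiv_neg : ∀ t, t₀ ≤ t → Bω - δ < ω t → ω t < Bω →
      -Cd * Cf * ω t + Cf * K (ω t) * v t < 0 := by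
    intro t ht h1 h2
    have hK : |K (ω t)| < ε := hKs _ (by have := min_le_left δ₀ (Bω/2); linarith) h2
    have hv : |v t| ≤ Mv := hMvb t ht
    have hb1 : -Cd * Cf * ω t < -Cd * Cf * (Bω / 2) := by
      have : Bω / 2 ≤ Bω - δ := by linarith
      nlinarith [mul_pos hCd hCf]
    have hb2 : Cf * K (ω t) * v t ≤ Cf * (ε * Mv) := by
      have : |K (ω t) * v t| ≤ ε * Mv := by
        rw [abs_mul]
        exact mul_le_mul hK.le hv (abs_nonneg _) hεpos.le
      have h3 : K (ω t) * v t ≤ ε * Mv := (le_abs_self _).trans this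
      calc Cf * K (ω t) * v t = Cf * (K (ω t) * v t) := by ring
        _ ≤ Cf * (ε * Mv) := by nlinarith
    have hb3 : Cf * (ε * Mv) < Cd * Cf * (Bω / 2) := by
      have key : ε * (Mv + 1) = Cd * Bω / 2 := by
        rw [hε]; field_simp
      nlinarith [hεpos, hCf, hMvnn]
    linarith
  -- last time below Bω - δ before s
  set T : Set ℝ := Icc t₀ s ∩ ω ⁻¹' (Iic (Bω - δ)) with hT
  have hTclosed : IsClosed T :=
    (hωcont t₀ s le_rfl).preimage_isClosed_of_isClosed isClosed_Icc isClosed_Iic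
  have hTne : T.Nonempty := ⟨t₀, ⟨le_rfl, hst₀⟩, by simp [h0]; linarith⟩
  have hTbdd : BddAbove T := ⟨s, fun x hx => hx.1.2⟩
  set r := sSup T with hr
  have hrT : r ∈ T := hTclosed.csSup_mem hTne hTbdd
  have hrt₀ : t₀ ≤ r := hrT.1.1
  have hrs : r ≤ s := hrT.1.2
  have hωr : ω r ≤ Bω - δ := hrT.2
  have hrlt : r < s := lt_of_le_of_ne hrs (by intro h; rw [h] at hωr; linarith)
  have hmid : ∀ t, r < t → t < s → Bω - δ < ω t ∧ ω t < Bω := by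
    intro t h1 h2
    constructor
    · by_contra h
      push_neg at h
      exact absurd (le_csSup hTbdd ⟨⟨hrt₀.trans h1.le, h2.le⟩, h⟩) (not_le.mpr h1)
    · exact hbefore t (hrt₀.trans h1.le) h2
  -- mean value theorem
  obtain ⟨c, hc, hceq⟩ := exists_hasDerivAt_eq_slope ω
    (fun t => -Cd * Cf * ω t + Cf * K (ω t) * v t) hrlt
    (hωcont r s hrt₀)
    (fun x hx => hode x (hrt₀.trans hx.1.le))
  have hcband := hmid c hc.1 hc.2
  have hneg := hderiv_neg c (hrt₀.trans hc.1.le) hcband.1 hcband.2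
  rw [hceq] at hneg
  have hpos : 0 < (ω s - ω r) / (s - r) := by
    apply div_pos (by linarith) (by linarith)
  linarith

theorem stmt_8 (Cd Cf Bω t₀ : ℝ) (hCd : 0 < Cd) (hCf : 0 < Cf) (hB : 0 < Bω)
    (ω v K : ℝ → ℝ)
    (hv_cont : ContinuousOn v (Set.Ici t₀)) (hv_bdd : ∃ Mv, ∀ t, t₀ ≤ t → |v t| ≤ Mv)
    (hK_cont : Continuous K) (hK0 : K 0 = 1)
    (hK_lim_pos : Filter.Tendsto K (nhdsWithin Bω (Set.Iio Bω)) (nhds 0))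
    (hK_lim_neg : Filter.Tendsto K (nhdsWithin (-Bω) (Set.Ioi (-Bω))) (nhds 0))
    (hKv_bdd : ∃ M, ∀ x t, t₀ ≤ t → |K x * v t| ≤ M)
    (hode : ∀ t, t₀ ≤ t →
      HasDerivAt ω (-Cd * Cf * ω t + Cf * K (ω t) * v t) t)
    (h0 : ω t₀ = 0) :
    ∀ t, t₀ ≤ t → |ω t| < Bω := by
  have hup : ∀ t, t₀ ≤ t → ω t < Bω :=
    aux_onesided Cd Cf Bω t₀ hCd hCf hB ω v K hv_bdd hK_lim_pos hode h0
  have hdown : ∀ t, t₀ ≤ t → -ω t < Bω := by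
    have hneg_map : Filter.Tendsto (fun x : ℝ => -x) (nhdsWithin Bω (Set.Iio Bω))
        (nhdsWithin (-Bω) (Set.Ioi (-Bω))) := by
      rw [tendsto_nhdsWithin_iff]
      constructor
      · exact (continuous_neg.tendsto Bω).mono_left nhdsWithin_le_nhds
      · filter_upwards [self_mem_nhdsWithin] with x hx
        exact Set.mem_Ioi.mpr (neg_lt_neg (Set.mem_Iio.mp hx))
    refine aux_onesided Cd Cf Bω t₀ hCd hCf hB (fun t => -ω t) (fun t => -v t)
      (fun x => K (-x)) ?_ (hK_lim_neg.comp hneg_map) ?_ (by simp [h0])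
    · obtain ⟨Mv, hMv⟩ := hv_bdd
      exact ⟨Mv, fun t ht => by simpa using hMv t ht⟩
    · intro t ht
      have : HasDerivAt (fun t => -ω t) _ t := (hode t ht).neg
      convert this using 1
      simp only [neg_neg]
      ring
  intro t ht
  rw [abs_lt]
  exact ⟨by linarith [hdown t ht], hup t ht⟩
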